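/- Let λ > 0, let Q₀ be a random variable with the exponential distribution of rate λ, and let I be a random variable with I ≤ 0 almost surely, independent of Q₀. Then for every θ ≥ 0, E[e^{−θ·max(Q₀ + I, 0)}] = 1 − (θ/(λ+θ)) · E[e^{λ I}]. -/

import Mathlib

open MeasureTheory ProbabilityTheory Real Set Filter
open scoped ENNReal NNReal

lemma exponentialPDFReal_eq' (r x : ℝ) :
    exponentialPDFReal r x = if 0 ≤ x then r * Real.exp (-(r * x)) else 0 := by
  rw [exponentialPDFReal, gammaPDFReal]
  simp only [rpow_one, Real.Gamma_one, div_one, sub_self, rpow_zero, mul_one]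

lemma integral_Ioi_rate_exp {b : ℝ} (hb : 0 < b) (c : ℝ) :
    ∫ x in Ioi c, b * Real.exp (-(b * x)) = Real.exp (-(b * c)) := by
  have h := integral_Ioi_of_hasDerivAt_of_tendsto'
    (f := fun a => -Real.exp (-(b * a))) (f' := fun x => b * Real.exp (-(b * x)))
    (a := c) (m := 0)
    (fun x _ => hasDerivAt_neg_exp_mul_exp)
    (by have h := ((exp_neg_integrableOn_Ioi c hb)).const_mul b; simp only [neg_mul] at h; exact h)
    ?_
  · simpa using h
  · have h1 : Tendsto (fun a : ℝ => b * a) atTop atTop :=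
      Filter.tendsto_id.const_mul_atTop hb
    have h2 : Tendsto (fun a : ℝ => Real.exp (-(b * a))) atTop (nhds 0) :=
      Real.tendsto_exp_neg_atTop_nhds_zero.comp h1
    simpa using h2.neg

lemma inner_exp_integral (lam θ : ℝ) (hlam : 0 < lam) (hθ : 0 ≤ θ) {y : ℝ} (hy : y ≤ 0) :
    ∫ x, Real.exp (-(θ * max (x + y) 0)) ∂(expMeasure lam)
      = 1 - θ / (lam + θ) * Real.exp (lam * y) := by
  have hlt : 0 < lam + θ := by linarith
  set g : ℝ → ℝ := fun x => Real.exp (-(θ * max (x + y) 0)) with hg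
  have hgcont : Continuous g := by
    apply Real.continuous_exp.comp
    exact ((continuous_const.mul ((continuous_id.add continuous_const).max
      continuous_const))).neg
  -- rewrite the measure as withDensity
  have hmeas : expMeasure lam
      = MeasureTheory.volume.withDensity
        (fun x => ((exponentialPDFReal lam x).toNNReal : ℝ≥0∞)) := by
    rw [expMeasure, gammaMeasure]
    rfl
  rw [hmeas, integral_withDensity_eq_integral_smul
    ((measurable_exponentialPDFReal lam).real_toNNReal) g]
  have hsmul : ∀ x, (exponentialPDFReal lam x).toNNReal • g x
      = Set.indicator (Ici (0:ℝ)) (fun x => lam * Real.exp (-(lam * x)) * g x) x := by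
    intro x
    rw [NNReal.smul_def, smul_eq_mul, Real.coe_toNNReal _ (exponentialPDFReal_nonneg hlam x),
      exponentialPDFReal_eq']
    by_cases hx : 0 ≤ x
    · rw [if_pos hx, Set.indicator_of_mem (show x ∈ Ici (0:ℝ) from hx)]
    · push_neg at hx
      rw [if_neg (not_le.mpr hx), Set.indicator_of_notMem (by simpa using hx.not_ge), zero_mul]
  rw [integral_congr_ae (Filter.Eventually.of_forall hsmul), integral_indicator measurableSet_Ici,
    integral_Ici_eq_integral_Ioi]
  -- split the integral at -y
  have hc : (0:ℝ) ≤ -y := by linarith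
  have hunion : Ioc (0:ℝ) (-y) ∪ Ioi (-y) = Ioi 0 := Ioc_union_Ioi_eq_Ioi hc
  have hIntIoi : IntegrableOn (fun x => lam * Real.exp (-(lam * x)) * g x) (Ioi 0) := by
    apply Integrable.mono' ((exp_neg_integrableOn_Ioi 0 hlam).const_mul lam)
    · exact ((continuous_const.mul
        (Real.continuous_exp.comp (continuous_const.mul continuous_id).neg)).mul
        hgcont).aestronglyMeasurable
    · refine Filter.Eventually.of_forall fun x => ?_
      rw [neg_mul]
      have hg1 : g x ≤ 1 := by
        rw [hg]
        simp only
        rw [← Real.exp_zero]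
        apply Real.exp_le_exp.mpr
        simp only [neg_nonpos]
        exact mul_nonneg hθ (le_max_right _ _)
      have hg0 : 0 ≤ g x := (Real.exp_pos _).le
      have h1 : 0 ≤ lam * Real.exp (-(lam * x)) :=
        mul_nonneg hlam.le (Real.exp_pos _).le
      rw [Real.norm_eq_abs, abs_mul, abs_of_nonneg h1, abs_of_nonneg hg0]
      calc lam * Real.exp (-(lam * x)) * g x ≤ lam * Real.exp (-(lam * x)) * 1 := by
            exact mul_le_mul_of_nonneg_left hg1 h1
        _ = lam * Real.exp (-(lam * x)) := mul_one _
  rw [← hunion, setIntegral_union (Ioc_disjoint_Ioi le_rfl) measurableSet_Ioi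
    (hIntIoi.mono_set (hunion ▸ subset_union_left))
    (hIntIoi.mono_set (hunion ▸ subset_union_right))]
  -- first piece
  have hfirst : ∫ x in Ioc (0:ℝ) (-y), lam * Real.exp (-(lam * x)) * g x
      = 1 - Real.exp (lam * y) := by
    have heq : ∀ x ∈ Ioc (0:ℝ) (-y), lam * Real.exp (-(lam * x)) * g x
        = lam * Real.exp (-(lam * x)) := by
      intro x hx
      have : x + y ≤ 0 := by have := hx.2; linarith
      rw [hg]
      simp [max_eq_right this]
    rw [setIntegral_congr_fun measurableSet_Ioc heq, ← intervalIntegral.integral_of_le hc]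
    rw [intervalIntegral.integral_eq_sub_of_hasDerivAt
      (f := fun a => -Real.exp (-(lam * a)))
      (fun x _ => hasDerivAt_neg_exp_mul_exp) ?_]
    · simp only [mul_neg, neg_neg, mul_zero, neg_zero, Real.exp_zero]
      ring
    · apply ContinuousOn.intervalIntegrable
      exact ((continuous_const.mul
        (Real.continuous_exp.comp (continuous_const.mul continuous_id).neg))).continuousOn
  -- second piece
  have hsecond : ∫ x in Ioi (-y), lam * Real.exp (-(lam * x)) * g x
      = lam / (lam + θ) * Real.exp (lam * y) := by
    have heq : ∀ x ∈ Ioi (-y), lam * Real.exp (-(lam * x)) * g x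
        = (lam / (lam + θ) * Real.exp (-(θ * y))) * ((lam + θ) * Real.exp (-((lam + θ) * x))) := by
      intro x hx
      have hx' : 0 ≤ x + y := by have : -y < x := hx; linarith
      have e1 : Real.exp (-(lam * x)) * Real.exp (-(θ * (x + y)))
          = Real.exp (-(θ * y)) * Real.exp (-((lam + θ) * x)) := by
        rw [← Real.exp_add, ← Real.exp_add]
        ring_nf
      rw [hg]
      simp only [max_eq_left hx']
      rw [mul_assoc, e1]
      field_simp
    rw [setIntegral_congr_fun measurableSet_Ioi heq, integral_const_mul,
      integral_Ioi_rate_exp hlt, mul_assoc, ← Real.exp_add,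
      show (-(θ * y) + -((lam + θ) * -y)) = lam * y by ring]
  rw [hfirst, hsecond]
  have hne : lam + θ ≠ 0 := hlt.ne'
  field_simp
  ring

/-- If `Q₀` is exponential of rate `λ > 0` and `I ≤ 0` a.s. is independent of `Q₀`, then for every
`θ ≥ 0`, `𝔼[e^{-θ max(Q₀ + I, 0)}] = 1 - (θ/(λ+θ)) 𝔼[e^{λ I}]`. -/
theorem min_workload_exponential_initial
    {Ω : Type*} [MeasureSpace Ω] [IsProbabilityMeasure (ℙ : Measure Ω)]
    (lam : ℝ) (hlam : 0 < lam)
    (Q₀ I : Ω → ℝ) (hQ₀ : Measurable Q₀) (hI : Measurable I)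
    (hQ₀law : Measure.map Q₀ ℙ = expMeasure lam)
    (hI0 : ∀ᵐ ω ∂ℙ, I ω ≤ 0)
    (hindep : IndepFun Q₀ I ℙ)
    (θ : ℝ) (hθ : 0 ≤ θ) :
    ∫ ω, Real.exp (-(θ * max (Q₀ ω + I ω) 0)) ∂ℙ
      = 1 - θ / (lam + θ) * ∫ ω, Real.exp (lam * I ω) ∂ℙ := by
  set ν := Measure.map I ℙ with hν
  set μ := expMeasure lam with hμ'
  have hνprob : IsProbabilityMeasure ν := Measure.isProbabilityMeasure_map hI.aemeasurable
  have hμprob : IsProbabilityMeasure μ := isProbabilityMeasure_expMeasure hlam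
  set f : ℝ × ℝ → ℝ := fun p => Real.exp (-(θ * max (p.1 + p.2) 0)) with hf
  have hfcont : Continuous f := by
    apply Real.continuous_exp.comp
    exact (continuous_const.mul
      (((continuous_fst.add continuous_snd)).max continuous_const)).neg
  have hmap : Measure.map (fun ω => (Q₀ ω, I ω)) ℙ = μ.prod ν := by
    rw [← hQ₀law, hν]
    exact (ProbabilityTheory.indepFun_iff_map_prod_eq_prod_map_map
      hQ₀.aemeasurable hI.aemeasurable).mp hindep
  have hstep1 : ∫ ω, Real.exp (-(θ * max (Q₀ ω + I ω) 0)) ∂ℙ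
      = ∫ p, f p ∂(μ.prod ν) := by
    rw [← hmap, integral_map (hQ₀.prodMk hI).aemeasurable hfcont.aestronglyMeasurable]
  have hfint : Integrable f (μ.prod ν) := by
    apply Integrable.mono' (integrable_const 1) hfcont.aestronglyMeasurable
    refine Filter.Eventually.of_forall fun p => ?_
    rw [Real.norm_eq_abs, abs_of_nonneg (Real.exp_pos _).le, ← Real.exp_zero]
    apply Real.exp_le_exp.mpr
    simp only [neg_nonpos]
    exact mul_nonneg hθ (le_max_right _ _)
  have hstep2 : ∫ p, f p ∂(μ.prod ν) = ∫ y, ∫ x, f (x, y) ∂μ ∂ν :=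
    integral_prod_symm f hfint
  have hyae : ∀ᵐ y ∂ν, y ≤ 0 := by
    rw [hν, ae_map_iff hI.aemeasurable (measurableSet_Iic (a := (0:ℝ)))]
    exact hI0
  have hstep3 : ∫ y, ∫ x, f (x, y) ∂μ ∂ν
      = ∫ y, (1 - θ / (lam + θ) * Real.exp (lam * y)) ∂ν := by
    apply integral_congr_ae
    filter_upwards [hyae] with y hy
    exact inner_exp_integral lam θ hlam hθ hy
  have hexpint : Integrable (fun y => Real.exp (lam * y)) ν := by
    apply Integrable.mono' (integrable_const 1)
      (by continuity : Continuous fun y : ℝ => Real.exp (lam * y)).aestronglyMeasurable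
    filter_upwards [hyae] with y hy
    rw [Real.norm_eq_abs, abs_of_nonneg (Real.exp_pos _).le, ← Real.exp_zero]
    exact Real.exp_le_exp.mpr (by nlinarith)
  have hstep4 : ∫ y, (1 - θ / (lam + θ) * Real.exp (lam * y)) ∂ν
      = 1 - θ / (lam + θ) * ∫ y, Real.exp (lam * y) ∂ν := by
    rw [integral_sub (integrable_const 1) (hexpint.const_mul _), integral_const,
      integral_const_mul]
    simp
  have hstep5 : ∫ y, Real.exp (lam * y) ∂ν = ∫ ω, Real.exp (lam * I ω) ∂ℙ := by
    rw [hν, integral_map hI.aemeasurable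
      (by continuity : Continuous fun y : ℝ => Real.exp (lam * y)).aestronglyMeasurable]
  rw [hstep1, hstep2, hstep3, hstep4, hstep5]
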